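/- Let n ≥ 2, s ≥ 3, and let {H_iα_i}_{i=1}^{s} be a coset partition of the free group F_n, where H_i < F_n has finite index d_i, α_i ∈ F_n, and 1 < d_1 ≤ … ≤ d_s. For w ∈ F_n let o_{*i}(w) be the least positive integer m with w^m ∈ α_i⁻¹H_iα_i, and let o_max(w) = max{o_{*i}(w) : 1 ≤ i ≤ s}. If there exists w ∈ F_n with o_max(w) > d_{s-2}, then the partition has multiplicity, i.e., d_i = d_j for some i ≠ j. -/
import Mathlib

open Finset

/-- Structure of the occurrence set of a periodic predicate inside `range L`. -/
lemma CP_filter_struct (P : ℕ → Prop) [DecidablePred P] (o L : ℕ) (ho : 0 < o) (hL : 0 < L)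
    (hoL : o ∣ L)
    (hP : ∀ m k : ℕ, P m → (P k ↔ (o : ℤ) ∣ (k : ℤ) - m))
    (hne : ∃ m, P m) :
    ∃ a < o, P a ∧ (Finset.range L).filter P = (Finset.range (L / o)).image (fun t => a + o * t) := by
  classical
  obtain ⟨a, hfind, hmin⟩ : ∃ a, P a ∧ ∀ b, P b → a ≤ b :=
    ⟨Nat.find hne, Nat.find_spec hne, fun b hb => Nat.find_min' hne hb⟩
  have key : (a : ℤ) = ((a % o : ℕ) : ℤ) + (o : ℤ) * ((a / o : ℕ) : ℤ) := by
    exact_mod_cast (Nat.mod_add_div a o).symm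
  have hamod : P (a % o) := by
    rw [hP a (a % o) hfind]
    exact ⟨-((a / o : ℕ) : ℤ), by rw [key]; ring⟩
  have hao : a < o := by
    have h1 : a ≤ a % o := hmin _ hamod
    have h2 : a % o < o := Nat.mod_lt _ ho
    have h3 : a % o ≤ a := Nat.mod_le _ _
    omega
  refine ⟨a, hao, hfind, ?_⟩
  ext m
  simp only [mem_filter, mem_range, mem_image]
  constructor
  · rintro ⟨hmL, hPm⟩
    have hdvd : (o : ℤ) ∣ (m : ℤ) - a := (hP a m hfind).1 hPm
    have ham : a ≤ m := hmin _ hPm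
    have hdvdn : o ∣ m - a := by
      have h2 : (o : ℤ) ∣ ((m - a : ℕ) : ℤ) := by rwa [Nat.cast_sub ham]
      exact_mod_cast h2
    obtain ⟨t, ht⟩ := hdvdn
    obtain ⟨K, hK⟩ := hoL
    have htK : t < K := by
      have h5 : o * t < o * K := by omega
      exact lt_of_mul_lt_mul_left h5 (by omega)
    refine ⟨t, ?_, by omega⟩
    rw [hK, Nat.mul_div_cancel_left _ ho]
    exact htK
  · rintro ⟨t, htK, rfl⟩
    obtain ⟨K, hK⟩ := hoL
    rw [hK, Nat.mul_div_cancel_left _ ho] at htK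
    constructor
    · have h6 : o * (t + 1) ≤ o * K := Nat.mul_le_mul_left _ (by omega)
      have h7 : o * (t + 1) = o * t + o := by ring
      omega
    · rw [hP a _ hfind]
      exact ⟨t, by push_cast; ring⟩

/-- Mirsky–Newman style: the maximal period in a coloring of ℕ by arithmetic
progressions is attained by at least two occurring colors. -/
lemma CP_MN {s : ℕ} (c : ℕ → Fin s) (o : Fin s → ℕ) (ho : ∀ i, 0 < o i)
    (M : ℕ) (hM : 1 < M) (hoM : ∀ i, o i ≤ M)
    (hdvd : ∀ m k : ℕ, c k = c m ↔ (o (c m) : ℤ) ∣ (k : ℤ) - m)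
    (j : Fin s) (hj : o j = M) (hjocc : ∃ m, c m = j) :
    ∃ i, i ≠ j ∧ o i = M ∧ ∃ m, c m = i := by
  classical
  by_contra hcon
  push_neg at hcon
  set L : ℕ := ∏ i, o i with hLdef
  have hL : 0 < L := Finset.prod_pos (fun i _ => ho i)
  have hoLdvd : ∀ i, (∃ m, c m = i) → o i ∣ L := fun i _ => Finset.dvd_prod_of_mem o (Finset.mem_univ i)
  set ζ : ℂ := Complex.exp (2 * Real.pi * Complex.I / M) with hζdef
  have hprim : IsPrimitiveRoot ζ M := Complex.isPrimitiveRoot_exp M (by omega)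
  have hζ1 : ζ ≠ 1 := by
    intro h
    have h2 : M ∣ 1 := hprim.dvd_of_pow_eq_one 1 (by simp [h])
    rw [Nat.dvd_one] at h2
    omega
  have hζM : ζ ^ M = 1 := hprim.pow_eq_one
  have hζL : ζ ^ L = 1 := by
    obtain ⟨K, hK⟩ : M ∣ L := hj ▸ hoLdvd j hjocc
    rw [hK, pow_mul, hζM, one_pow]
  have htot : ∑ m ∈ Finset.range L, ζ ^ m = 0 := by
    rw [geom_sum_eq hζ1, hζL, sub_self, zero_div]
  have hfib : ∑ i : Fin s, ∑ m ∈ (Finset.range L).filter (fun m => c m = i), ζ ^ m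
      = ∑ m ∈ Finset.range L, ζ ^ m := by
    exact Finset.sum_fiberwise_eq_sum_filter (Finset.range L) Finset.univ c (fun m => ζ ^ m) |>.trans
      (by simp)
  -- property needed for filter_struct, per color
  have hprop : ∀ i : Fin s, (∃ m, c m = i) → ∀ m k : ℕ, c m = i → (c k = i ↔ (o i : ℤ) ∣ (k : ℤ) - m) := by
    intro i _ m k hm
    rw [← hm]
    exact hdvd m k
  -- inner sums
  have hinner : ∀ i : Fin s, i ≠ j →
      ∑ m ∈ (Finset.range L).filter (fun m => c m = i), ζ ^ m = 0 := by
    intro i hij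
    by_cases hocc : ∃ m, c m = i
    · have hoine : o i ≠ M := fun h => (fun h => by obtain ⟨m, hm⟩ := hocc; exact hcon i hij h m hm) h
      obtain ⟨a, hao, hPa, hfilt⟩ := CP_filter_struct (fun m => c m = i) (o i) L (ho i) hL
        (hoLdvd i hocc) (fun m k hm => hprop i hocc m k hm) hocc
      rw [hfilt, Finset.sum_image (by intro x _ y _ h; exact Nat.eq_of_mul_eq_mul_left (ho i) (Nat.add_left_cancel h))]
      have hζoi : ζ ^ (o i) ≠ 1 := by
        intro h
        have hdvdM : M ∣ o i := hprim.dvd_of_pow_eq_one _ h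
        have := Nat.le_of_dvd (ho i) hdvdM
        have := hoM i
        omega
      have : ∑ t ∈ Finset.range (L / o i), ζ ^ (a + o i * t)
          = ζ ^ a * ∑ t ∈ Finset.range (L / o i), (ζ ^ (o i)) ^ t := by
        rw [Finset.mul_sum]
        exact Finset.sum_congr rfl (fun t _ => by rw [← pow_mul, ← pow_add])
      rw [this, geom_sum_eq hζoi]
      have hLoi : (ζ ^ o i) ^ (L / o i) = 1 := by
        rw [← pow_mul, Nat.mul_div_cancel' (hoLdvd i hocc), hζL]
      rw [hLoi, sub_self, zero_div, mul_zero]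
    · push_neg at hocc
      rw [Finset.filter_false_of_mem (fun m _ => hocc m), Finset.sum_empty]
  have hjsum : ∑ m ∈ (Finset.range L).filter (fun m => c m = j), ζ ^ m ≠ 0 := by
    obtain ⟨a, hao, hPa, hfilt⟩ := CP_filter_struct (fun m => c m = j) (o j) L (ho j) hL
      (hoLdvd j hjocc) (fun m k hm => hprop j hjocc m k hm) hjocc
    rw [hfilt, Finset.sum_image (by intro x _ y _ h; exact Nat.eq_of_mul_eq_mul_left (ho j) (Nat.add_left_cancel h))]
    have : ∑ t ∈ Finset.range (L / o j), ζ ^ (a + o j * t)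
        = ζ ^ a * ∑ t ∈ Finset.range (L / o j), (ζ ^ (o j)) ^ t := by
      rw [Finset.mul_sum]
      exact Finset.sum_congr rfl (fun t _ => by rw [← pow_mul, ← pow_add])
    rw [this, hj, hζM]
    simp only [one_pow, Finset.sum_const, Finset.card_range, nsmul_eq_mul, mul_one]
    have hdiv : 0 < L / M := Nat.div_pos (Nat.le_of_dvd hL (hj ▸ hoLdvd j hjocc)) (lt_trans Nat.zero_lt_one hM)
    apply mul_ne_zero
    · exact pow_ne_zero _ (by rw [hζdef]; exact Complex.exp_ne_zero _)
    · exact_mod_cast hdiv.ne'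
  have := Finset.sum_eq_single_of_mem j (Finset.mem_univ j)
    (fun i _ hij => hinner i hij)
  rw [hfib, htot] at this
  exact hjsum this.symm

/-- Powers of `w` lying in `K` are exactly multiples of the least positive exponent. -/
lemma CP_zpow_mem_iff {G : Type*} [Group G] (K : Subgroup G) (w : G) (o : ℕ)
    (hleast : IsLeast {m : ℕ | 0 < m ∧ w ^ m ∈ K} o) :
    ∀ t : ℤ, w ^ t ∈ K ↔ (o : ℤ) ∣ t := by
  obtain ⟨⟨ho, hwo⟩, hlb⟩ := hleast
  have hwoz : w ^ (o : ℤ) ∈ K := by rw [zpow_natCast]; exact hwo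
  intro t
  constructor
  · intro ht
    have hr : w ^ (t % (o : ℤ)) ∈ K := by
      have : t % (o : ℤ) = t - (o : ℤ) * (t / (o : ℤ)) := Int.emod_def t o
      rw [this, zpow_sub]
      exact K.mul_mem ht (K.inv_mem (by rw [zpow_mul]; exact K.zpow_mem hwoz _))
    have hnonneg : 0 ≤ t % (o : ℤ) := Int.emod_nonneg t (by exact_mod_cast ho.ne')
    have hlt : t % (o : ℤ) < (o : ℤ) := Int.emod_lt_of_pos t (by exact_mod_cast ho)
    rcases eq_or_lt_of_le hnonneg with h0 | hpos
    · exact Int.dvd_of_emod_eq_zero h0.symm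
    · exfalso
      set r := (t % (o : ℤ)).toNat with hrdef
      have hrt : (r : ℤ) = t % (o : ℤ) := Int.toNat_of_nonneg hnonneg
      have hrK : w ^ r ∈ K := by
        have : w ^ (r : ℤ) ∈ K := by rw [hrt]; exact hr
        rwa [zpow_natCast] at this
      have hrpos : 0 < r := by omega
      have := hlb ⟨hrpos, hrK⟩
      omega
  · rintro ⟨q, rfl⟩
    rw [zpow_mul]
    exact K.zpow_mem hwoz _

/-- The least positive exponent is at most the index. -/
lemma CP_o_le_index {G : Type*} [Group G] (K : Subgroup G) (w : G) (o d : ℕ)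
    (hleast : IsLeast {m : ℕ | 0 < m ∧ w ^ m ∈ K} o)
    (hd : K.index = d) (hd0 : 0 < d) : o ≤ d := by
  have hfin : Finite (G ⧸ K) := Nat.finite_of_card_ne_zero (by rw [← Subgroup.index]; omega)
  have : Fintype (G ⧸ K) := Fintype.ofFinite _
  have hcard : Fintype.card (G ⧸ K) = d := by
    rw [← Nat.card_eq_fintype_card, ← Subgroup.index, hd]
  have key : ∀ a b : Fin (d + 1), a < b → ((w ^ (a : ℕ) : G) : G ⧸ K) = ↑(w ^ (b : ℕ)) → o ≤ d := by
    intro a b hab heq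
    have h2 : (w ^ (a : ℕ))⁻¹ * w ^ (b : ℕ) ∈ K := QuotientGroup.eq.mp heq
    have h4 : (w ^ (a : ℕ))⁻¹ * w ^ (b : ℕ) = w ^ (((b : ℕ) : ℤ) - ((a : ℕ) : ℤ)) := by
      rw [← zpow_natCast w (a : ℕ), ← zpow_natCast w (b : ℕ), ← zpow_neg, ← zpow_add]
      congr 1
      ring
    rw [h4] at h2
    have h5 : (((b : ℕ) - (a : ℕ) : ℕ) : ℤ) = ((b : ℕ) : ℤ) - ((a : ℕ) : ℤ) := by
      have : (a : ℕ) ≤ (b : ℕ) := le_of_lt hab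
      omega
    rw [← h5, zpow_natCast] at h2
    have h6 := hleast.2 ⟨by omega, h2⟩
    omega
  obtain ⟨m, k, hmk, heq⟩ := Fintype.exists_ne_map_eq_of_card_lt
    (fun m : Fin (d + 1) => ((w ^ (m : ℕ) : G) : G ⧸ K))
    (by rw [hcard, Fintype.card_fin]; omega)
  rcases Ne.lt_or_gt hmk with hlt | hlt
  · exact key m k hlt heq
  · exact key k m hlt heq.symm

/-- Per-line counting: the two colors of maximal period occupy the same number of
positions in `range r`. -/
lemma CP_line_card {s : ℕ} (c : ℕ → Fin s) (o : Fin s → ℕ) (ho : ∀ i, 0 < o i)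
    (M : ℕ) (hM : 1 < M) (hoM : ∀ i, o i ≤ M)
    (hdvd : ∀ m k : ℕ, c k = c m ↔ (o (c m) : ℤ) ∣ (k : ℤ) - m)
    (j0 j1 : Fin s) (hne : j0 ≠ j1) (ho0 : o j0 = M) (ho1 : o j1 = M)
    (huniq : ∀ i, o i = M → i = j0 ∨ i = j1)
    (r : ℕ) (hr : 0 < r) (hMr : M ∣ r) :
    ((Finset.range r).filter (fun m => c m = j0)).card
      = ((Finset.range r).filter (fun m => c m = j1)).card := by
  classical
  have hprop : ∀ i : Fin s, ∀ m k : ℕ, c m = i → (c k = i ↔ (o i : ℤ) ∣ (k : ℤ) - m) := by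
    intro i m k hm
    rw [← hm]
    exact hdvd m k
  have cardfact : ∀ i, o i = M → (∃ m, c m = i) →
      ((Finset.range r).filter (fun m => c m = i)).card = r / M := by
    intro i hoi hocc
    obtain ⟨a, hao, hPa, hfilt⟩ := CP_filter_struct (fun m => c m = i) (o i) r (ho i) hr
      (hoi ▸ hMr) (fun m k hm => hprop i m k hm) hocc
    rw [hfilt, Finset.card_image_of_injective _
      (fun x y h => Nat.eq_of_mul_eq_mul_left (ho i) (Nat.add_left_cancel h)), Finset.card_range,
      hoi]
  by_cases h0 : ∃ m, c m = j0
  · have h1 : ∃ m, c m = j1 := by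
      obtain ⟨i, hij, hoi, hocc⟩ := CP_MN c o ho M hM hoM hdvd j0 ho0 h0
      rcases huniq i hoi with rfl | rfl
      · exact absurd rfl hij
      · exact hocc
    rw [cardfact j0 ho0 h0, cardfact j1 ho1 h1]
  · by_cases h1 : ∃ m, c m = j1
    · exfalso
      obtain ⟨i, hij, hoi, hocc⟩ := CP_MN c o ho M hM hoM hdvd j1 ho1 h1
      rcases huniq i hoi with rfl | rfl
      · exact h0 hocc
      · exact absurd rfl hij
    · push_neg at h0 h1
      rw [Finset.filter_false_of_mem (fun m _ => h0 m), Finset.filter_false_of_mem (fun m _ => h1 m)]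

/-- If for some `w ∈ F n` the maximum `o_max(w)` of the orders `o_{*i}(w)` exceeds
`d_{s-2}` (0-based: `d ⟨s-3,_⟩`), then the coset partition has multiplicity. -/
theorem multiplicity_of_omax_gt_d_sub_two
    (n s : ℕ) (hn : 2 ≤ n) (hs : 3 ≤ s)
    (H : Fin s → Subgroup (FreeGroup (Fin n)))
    (α : Fin s → FreeGroup (Fin n))
    (d : Fin s → ℕ)
    (hind : ∀ i, (H i).index = d i)
    (hone : ∀ i, 1 < d i)
    (hmono : Monotone d)
    (hpart : ∀ x : FreeGroup (Fin n), ∃! i : Fin s, x * (α i)⁻¹ ∈ H i)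
    (hw : ∃ (w : FreeGroup (Fin n)) (o : Fin s → ℕ) (omax : ℕ),
        (∀ i, IsLeast {m : ℕ | 0 < m ∧ α i * w ^ m * (α i)⁻¹ ∈ H i} (o i)) ∧
        (∀ i, o i ≤ omax) ∧ (∃ i, o i = omax) ∧
        d ⟨s - 3, by omega⟩ < omax) :
    ∃ i j, i ≠ j ∧ d i = d j := by
  classical
  obtain ⟨w, o, M, hleast, holeM, ⟨j0, hj0⟩, hMgt⟩ := hw
  by_contra hcon
  push_neg at hcon
  have hinj : Function.Injective d := fun i j h => by
    by_contra hne
    exact hcon i j hne h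
  -- the conjugated subgroups
  obtain ⟨K, hKmem, hKindex⟩ : ∃ K : Fin s → Subgroup (FreeGroup (Fin n)),
      (∀ (i) (x : FreeGroup (Fin n)), x ∈ K i ↔ α i * x * (α i)⁻¹ ∈ H i) ∧
      (∀ i, (K i).index = d i) := by
    refine ⟨fun i => (H i).comap (MulAut.conj (α i)).toMonoidHom, ?_, ?_⟩
    · intro i x
      simp [Subgroup.mem_comap, MulAut.conj_apply, mul_assoc]
    · intro i
      rw [Subgroup.index_comap_of_surjective _ (MulEquiv.surjective _)]
      exact hind i
  have hKleast : ∀ i, IsLeast {m : ℕ | 0 < m ∧ w ^ m ∈ K i} (o i) := by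
    intro i
    have : {m : ℕ | 0 < m ∧ w ^ m ∈ K i} = {m : ℕ | 0 < m ∧ α i * w ^ m * (α i)⁻¹ ∈ H i} := by
      ext m
      simp [hKmem i (w ^ m), mul_assoc]
    rw [this]
    exact hleast i
  have hopos : ∀ i, 0 < o i := fun i => (hKleast i).1.1
  have hdvd_iff : ∀ (i) (t : ℤ), w ^ t ∈ K i ↔ (o i : ℤ) ∣ t :=
    fun i => CP_zpow_mem_iff (K i) w (o i) (hKleast i)
  have hod : ∀ i, o i ≤ d i := fun i =>
    CP_o_le_index (K i) w (o i) (d i) (hKleast i) (hKindex i) (by have := hone i; omega)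
  have hM1 : 1 < M := by have := hone ⟨s - 3, by omega⟩; omega
  -- any index of maximal order is one of the two last ones
  have hpin : ∀ i : Fin s, o i = M → s - 2 ≤ i.val := by
    intro i hoi
    by_contra hlt
    push_neg at hlt
    have hle : i ≤ (⟨s - 3, by omega⟩ : Fin s) := by
      rw [Fin.le_def]
      simp only
      omega
    have := hmono hle
    have := hod i
    omega
  -- the choice of the coset containing a given element
  choose col hcol huniq using hpart
  have hcol_eq : ∀ (x : FreeGroup (Fin n)) (i : Fin s), col x = i ↔ x * (α i)⁻¹ ∈ H i := by
    intro x i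
    constructor
    · rintro rfl; exact hcol x
    · intro h; exact (huniq x i h).symm
  -- the coloring of each line, and its arithmetic structure
  have hdvdline : ∀ (g : FreeGroup (Fin n)) (m k : ℕ), col (g * w ^ k) = col (g * w ^ m) ↔
      (o (col (g * w ^ m)) : ℤ) ∣ (k : ℤ) - m := by
    intro g m k
    set i := col (g * w ^ m) with hidef
    have hi : (g * w ^ m) * (α i)⁻¹ ∈ H i := hcol _
    have hsplit : (g * w ^ k) * (α i)⁻¹
        = ((g * w ^ m) * (α i)⁻¹) * (α i * w ^ ((k : ℤ) - (m : ℤ)) * (α i)⁻¹) := by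
      have : w ^ (k : ℤ) = w ^ (m : ℤ) * w ^ ((k : ℤ) - (m : ℤ)) := by
        rw [← zpow_add]; congr 1; ring
      rw [← zpow_natCast w k, this, ← zpow_natCast w m]
      group
    have hmem : (g * w ^ k) * (α i)⁻¹ ∈ H i ↔ α i * w ^ ((k : ℤ) - (m : ℤ)) * (α i)⁻¹ ∈ H i := by
      rw [hsplit]
      exact mul_mem_cancel_left hi
    rw [hcol_eq (g * w ^ k) i, hmem, ← hKmem i, hdvd_iff i]
  -- the normal subgroup
  have hHfin : ∀ i, (H i).FiniteIndex := fun i => ⟨by rw [hind i]; have := hone i; omega⟩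
  set N : Subgroup (FreeGroup (Fin n)) := ⨅ i, (H i).normalCore with hNdef
  have hNnormal : N.Normal := by
    constructor
    intro x hx g
    rw [hNdef, Subgroup.mem_iInf] at hx ⊢
    intro i
    exact Subgroup.Normal.conj_mem (Subgroup.normalCore_normal (H i)) x (hx i) g
  have hNfin : N.FiniteIndex := by
    rw [hNdef]
    exact Subgroup.finiteIndex_iInf fun i => @Subgroup.finiteIndex_normalCore _ _ _ (hHfin i)
  have hNle : ∀ i, N ≤ H i := fun i =>
    le_trans (iInf_le _ i) (Subgroup.normalCore_le (H i))
  -- saturation of the cosets with respect to N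
  have hsat : ∀ (i : Fin s) (x y : FreeGroup (Fin n)),
      (QuotientGroup.mk' N) x = (QuotientGroup.mk' N) y →
      x * (α i)⁻¹ ∈ H i → y * (α i)⁻¹ ∈ H i := by
    intro i x y hxy hx
    have hmemN : x⁻¹ * y ∈ N := by
      rw [← QuotientGroup.ker_mk' N]
      rw [MonoidHom.mem_ker, map_mul, map_inv, hxy]
      simp
    have hconj : α i * (x⁻¹ * y) * (α i)⁻¹ ∈ N := hNnormal.conj_mem _ hmemN _
    have hsplit : y * (α i)⁻¹ = (x * (α i)⁻¹) * (α i * (x⁻¹ * y) * (α i)⁻¹) := by group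
    rw [hsplit]
    exact (H i).mul_mem hx (hNle i hconj)
  -- the finite quotient
  have hQfin : Finite (FreeGroup (Fin n) ⧸ N) :=
    Nat.finite_of_card_ne_zero (by rw [← Subgroup.index]; exact hNfin.index_ne_zero)
  have hQfintype : Fintype (FreeGroup (Fin n) ⧸ N) := Fintype.ofFinite _
  set π : FreeGroup (Fin n) →* FreeGroup (Fin n) ⧸ N := QuotientGroup.mk' N with hπdef
  set wbar : FreeGroup (Fin n) ⧸ N := π w with hwbardef
  set r : ℕ := orderOf wbar with hrdef
  have hr0 : 0 < r := orderOf_pos wbar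
  have hwrN : ∀ i, w ^ (r : ℤ) ∈ K i := by
    intro i
    have h1 : w ^ r ∈ N := by
      rw [← QuotientGroup.ker_mk' N, MonoidHom.mem_ker]
      show π (w ^ r) = 1
      rw [map_pow, ← hwbardef, hrdef, pow_orderOf_eq_one]
    have h2 : α i * w ^ r * (α i)⁻¹ ∈ N := hNnormal.conj_mem _ h1 _
    rw [zpow_natCast]
    exact (hKmem i _).mpr (hNle i h2)
  have hMr : M ∣ r := by
    have := (hdvd_iff j0 (r : ℤ)).mp (hwrN j0)
    rw [hj0] at this
    exact_mod_cast this
  -- find the partner index j1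
  have hcolline : ∀ (g : FreeGroup (Fin n)) (m k : ℕ),
      col (g * w ^ k) = col (g * w ^ m) ↔ (o (col (g * w ^ m)) : ℤ) ∣ (k : ℤ) - m :=
    hdvdline
  obtain ⟨j1, hj1ne, hj1o, -⟩ := CP_MN (fun m => col (α j0 * w ^ m)) o hopos M hM1 holeM
    (fun m k => hcolline (α j0) m k) j0 hj0
    ⟨0, by rw [hcol_eq]; simpa using (H j0).one_mem⟩
  -- uniqueness of maximal-order indices
  have huniqmax : ∀ i, o i = M → i = j0 ∨ i = j1 := by
    intro i hoi
    have h1 := hpin i hoi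
    have h2 := hpin j0 hj0
    have h3 := hpin j1 hj1o
    have h4 : i.val < s := i.isLt
    have h5 : j0.val < s := j0.isLt
    have h6 : j1.val < s := j1.isLt
    have h7 : j0.val ≠ j1.val := fun h => hj1ne (Fin.ext h).symm
    rcases Nat.lt_or_ge i.val (s - 1) with h8 | h8
    · rcases Nat.lt_or_ge j0.val (s - 1) with h9 | h9
      · left; exact Fin.ext (by omega)
      · right; exact Fin.ext (by omega)
    · rcases Nat.lt_or_ge j1.val (s - 1) with h9 | h9
      · left; exact Fin.ext (by omega)
      · right; exact Fin.ext (by omega)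
  -- per-line equality of counts
  have hline : ∀ g : FreeGroup (Fin n),
      ((Finset.range r).filter (fun m => col (g * w ^ m) = j0)).card
        = ((Finset.range r).filter (fun m => col (g * w ^ m) = j1)).card := by
    intro g
    exact CP_line_card (fun m => col (g * w ^ m)) o hopos M hM1 holeM
      (fun m k => hcolline g m k) j0 j1 (fun h => hj1ne h.symm) hj0 hj1o huniqmax r hr0 hMr
  -- the subgroup generated by wbar, and the partition of the quotient into lines
  set Z : Subgroup (FreeGroup (Fin n) ⧸ N) := Subgroup.zpowers wbar with hZdef
  have hQZfintype : Fintype ((FreeGroup (Fin n) ⧸ N) ⧸ Z) := Fintype.ofFinite _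
  have hπg : ∀ (g : FreeGroup (Fin n)) (m : ℕ), π (g * w ^ m) = π g * wbar ^ m := by
    intro g m
    rw [map_mul, map_pow, hwbardef]
  set PQ : Fin s → (FreeGroup (Fin n) ⧸ N) → Prop :=
    fun i q => ∃ x, π x = q ∧ x * (α i)⁻¹ ∈ H i with hPQdef
  -- description of the fibers over each line
  have hfiber : ∀ (i : Fin s) (y : FreeGroup (Fin n) ⧸ N) (g : FreeGroup (Fin n)), π g = y →
      Finset.univ.filter (fun q => PQ i q ∧ (QuotientGroup.mk q : _ ⧸ Z) = QuotientGroup.mk y)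
        = ((Finset.range r).filter (fun m => col (g * w ^ m) = i)).image
            (fun m => y * wbar ^ m) := by
    intro i y g hg
    ext q
    simp only [Finset.mem_filter, Finset.mem_univ, true_and, Finset.mem_image, Finset.mem_range]
    constructor
    · rintro ⟨⟨x, hxq, hxH⟩, hmk⟩
      have hyq : y⁻¹ * q ∈ Z := by
        rw [← QuotientGroup.eq]
        exact hmk.symm
      obtain ⟨t, ht⟩ := Subgroup.mem_zpowers_iff.mp hyq
      have hrp : (0 : ℤ) < (r : ℤ) := by exact_mod_cast hr0
      have hm0 : 0 ≤ t % (r : ℤ) := Int.emod_nonneg t (by exact_mod_cast hr0.ne')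
      set m := (t % (r : ℤ)).toNat with hmdef
      have hm : (m : ℤ) = t % r := Int.toNat_of_nonneg hm0
      have hmr : m < r := by
        have := Int.emod_lt_of_pos t hrp
        omega
      have hpow : wbar ^ m = wbar ^ t := by
        rw [← zpow_natCast, hm, hrdef]
        exact zpow_mod_orderOf wbar t
      have hq : y * wbar ^ m = q := by
        rw [hpow, ht]
        group
      have hπgm : π (g * w ^ m) = q := by rw [hπg, hg, hq]
      refine ⟨m, ⟨hmr, ?_⟩, hq⟩
      rw [hcol_eq]
      exact hsat i x (g * w ^ m) (by rw [hπgm, hxq]) hxH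
    · rintro ⟨m, ⟨hmr, hcolm⟩, rfl⟩
      refine ⟨⟨g * w ^ m, by rw [hπg, hg], (hcol_eq _ _).mp hcolm⟩, ?_⟩
      rw [QuotientGroup.eq]
      have : (y * wbar ^ m)⁻¹ * y = (wbar ^ m)⁻¹ := by group
      rw [this]
      exact Z.inv_mem (Subgroup.npow_mem_zpowers wbar m)
  have hfibcard : ∀ (i : Fin s) (y : FreeGroup (Fin n) ⧸ N) (g : FreeGroup (Fin n)), π g = y →
      (Finset.univ.filter
        (fun q => PQ i q ∧ (QuotientGroup.mk q : _ ⧸ Z) = QuotientGroup.mk y)).card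
        = ((Finset.range r).filter (fun m => col (g * w ^ m) = i)).card := by
    intro i y g hg
    rw [hfiber i y g hg]
    apply Finset.card_image_of_injOn
    intro a ha b hb hab
    simp only [Finset.coe_filter, Set.mem_setOf_eq, Finset.mem_range] at ha hb
    have h1 : wbar ^ a = wbar ^ b := by
      have := mul_left_cancel hab
      exact this
    exact pow_injOn_Iio_orderOf (by simpa [hrdef] using ha.1) (by simpa [hrdef] using hb.1) h1
  -- global counting by summing over the lines
  have hglobal : ∀ i : Fin s,
      (Finset.univ.filter (fun q => PQ i q)).card
        = ∑ cc : (FreeGroup (Fin n) ⧸ N) ⧸ Z,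
            (Finset.univ.filter
              (fun q => PQ i q ∧ (QuotientGroup.mk q : _ ⧸ Z) = cc)).card := by
    intro i
    rw [Finset.card_eq_sum_card_fiberwise
      (f := fun q : FreeGroup (Fin n) ⧸ N => (QuotientGroup.mk q : _ ⧸ Z))
      (t := Finset.univ) (fun x _ => Finset.mem_univ _)]
    apply Finset.sum_congr rfl
    intro cc _
    rw [Finset.filter_filter]
  have hcards : (Finset.univ.filter (fun q => PQ j0 q)).card
      = (Finset.univ.filter (fun q => PQ j1 q)).card := by
    rw [hglobal j0, hglobal j1]
    apply Finset.sum_congr rfl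
    intro cc _
    obtain ⟨y, hy⟩ := Quotient.exists_rep cc
    obtain ⟨g, hg⟩ := QuotientGroup.mk'_surjective N y
    have hy' : (QuotientGroup.mk y : _ ⧸ Z) = cc := hy
    rw [← hy', hfibcard j0 y g hg, hfibcard j1 y g hg, hline g]
  -- relating the counts to the indices
  have hcardPQ : ∀ i : Fin s, (Finset.univ.filter (fun q => PQ i q)).card * d i
      = Nat.card (FreeGroup (Fin n) ⧸ N) := by
    intro i
    have hmapind : ((H i).map π).index = d i := by
      rw [Subgroup.index_map_eq _ (QuotientGroup.mk'_surjective N)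
        (by rw [QuotientGroup.ker_mk']; exact hNle i)]
      exact hind i
    have hbij : (Finset.univ.filter (fun q => PQ i q)).card
        = (Finset.univ.filter (fun q => q ∈ (H i).map π)).card := by
      apply Finset.card_bij (fun q _ => q * (π (α i))⁻¹)
      · intro q hq
        simp only [Finset.mem_filter, Finset.mem_univ, true_and] at hq ⊢
        obtain ⟨x, rfl, hx⟩ := hq
        exact ⟨x * (α i)⁻¹, hx, by rw [map_mul, map_inv]⟩
      · intro q1 h1 q2 h2 h
        exact mul_right_cancel h
      · intro q' hq'
        simp only [Finset.mem_filter, Finset.mem_univ, true_and] at hq'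
        obtain ⟨h, hh, hπh⟩ := hq'
        refine ⟨q' * π (α i), ?_, by group⟩
        simp only [Finset.mem_filter, Finset.mem_univ, true_and]
        refine ⟨h * α i, ?_, by simpa using hh⟩
        rw [map_mul, hπh]
    rw [hbij]
    have hsub : (Finset.univ.filter (fun q => q ∈ (H i).map π)).card
        = Nat.card ((H i).map π) := by
      rw [Nat.card_eq_fintype_card]
      exact (Fintype.card_subtype _).symm
    rw [hsub, ← hmapind]
    exact Subgroup.card_mul_index ((H i).map π)
  have h0 := hcardPQ j0
  have h1 := hcardPQ j1
  rw [hcards] at h0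
  have hQpos : 0 < Nat.card (FreeGroup (Fin n) ⧸ N) := Nat.card_pos
  have hcpos : 0 < (Finset.univ.filter (fun q => PQ j1 q)).card := by
    rcases Nat.eq_zero_or_pos (Finset.univ.filter (fun q => PQ j1 q)).card with h | h
    · rw [h, zero_mul] at h1; omega
    · exact h
  exact hcon j0 j1 (fun h => hj1ne h.symm) (Nat.eq_of_mul_eq_mul_left hcpos (by omega))
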